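/- arXiv:1712.07072 — 6 statements merged into one kernel-verified Lean document; each statement's English description precedes it below -/
import Mathlib

section
/- Let F be a connected graph with f vertices and at least one edge, and let k ≥ 1. For n ≥ k·f, every n-vertex graph with no k pairwise vertex-disjoint copies of F has at most ex(n-(k-1)f, F) + C((k-1)f, 2) + (k-1)·f·(n-(k-1)f) edges, where ex(m, F) denotes the maximum number of edges of an m-vertex F-free graph and C(a,2) = a(a-1)/2. -/
open SimpleGraph

universe u v

/-- An (injective) copy of the graph `F` inside the graph `G`. -/
structure GraphCopy {α : Type u} {β : Type v} (F : SimpleGraph α) (G : SimpleGraph β) where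
  toFun : α → β
  inj : Function.Injective toFun
  adj : ∀ {a b : α}, F.Adj a b → G.Adj (toFun a) (toFun b)

/-- `G` contains a copy of `F` (i.e. a subgraph isomorphic to `F`). -/
def Contains {α : Type u} {β : Type v} (F : SimpleGraph α) (G : SimpleGraph β) : Prop :=
  Nonempty (GraphCopy F G)

/-- `G` contains `k` pairwise vertex-disjoint copies of `F`. -/
def HasDisjCopies {α : Type u} {β : Type v} (F : SimpleGraph α) (G : SimpleGraph β)
    (k : ℕ) : Prop :=
  ∃ c : Fin k → GraphCopy F G,
    ∀ i j : Fin k, i ≠ j → Disjoint (Set.range (c i).toFun) (Set.range (c j).toFun)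

/-- The join of two graphs: their disjoint union together with all cross edges. -/
def gJoin {α : Type u} {β : Type v} (G : SimpleGraph α) (H : SimpleGraph β) :
    SimpleGraph (α ⊕ β) where
  Adj x y :=
    match x, y with
    | Sum.inl a, Sum.inl b => G.Adj a b
    | Sum.inr a, Sum.inr b => H.Adj a b
    | _, _ => True
  symm := ⟨by rintro (a | a) (b | b) h <;> first | exact h.symm | trivial⟩
  loopless := ⟨by rintro (a | a) h; exacts [G.loopless.irrefl a h, H.loopless.irrefl a h]⟩

/-- The Turán number: maximum number of edges of an `n`-vertex `F`-free graph. -/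
noncomputable def exNum {α : Type u} (n : ℕ) (F : SimpleGraph α) : ℕ :=
  sSup {m : ℕ | ∃ G : SimpleGraph (Fin n), ¬ Contains F G ∧ m = G.edgeSet.ncard}

/-- The number of (unlabeled) copies of `H` in `G`, i.e. the number of subgraphs of `G`
isomorphic to `H`. -/
noncomputable def copyCount {α : Type u} {β : Type v} (H : SimpleGraph α)
    (G : SimpleGraph β) : ℕ :=
  {A : G.Subgraph | Nonempty (H ≃g A.coe)}.ncard

/-- The generalized Turán number: maximum number of copies of `H` in an
`n`-vertex `F`-free graph. -/
noncomputable def exGen {α : Type u} {γ : Type v} (n : ℕ) (H : SimpleGraph α)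
    (F : SimpleGraph γ) : ℕ :=
  sSup {m : ℕ | ∃ G : SimpleGraph (Fin n), ¬ Contains F G ∧ m = copyCount H G}

/-- `s` is a matching in `G`: a set of edges of `G`, pairwise vertex-disjoint. -/
def IsMatchingSet {V : Type u} (G : SimpleGraph V) (s : Finset (Sym2 V)) : Prop :=
  ↑s ⊆ G.edgeSet ∧ ∀ e ∈ s, ∀ f ∈ s, e ≠ f → ∀ x : V, x ∈ e → x ∉ f

/-- The number of matchings of size `l` in `G`. -/
noncomputable def matchCount {V : Type u} (G : SimpleGraph V) (l : ℕ) : ℕ :=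
  {s : Finset (Sym2 V) | s.card = l ∧ IsMatchingSet G s}.ncard

/-- `G` contains `k` pairwise vertex-disjoint triangles. -/
def HasDisjTriangles {V : Type u} (G : SimpleGraph V) (k : ℕ) : Prop :=
  ∃ S : Finset (Finset V), S.card = k ∧ (∀ T ∈ S, G.IsNClique 3 T) ∧
    (S : Set (Finset V)).Pairwise fun T T' => Disjoint T T'

/-- The number of copies of `lK₃` (families of `l` pairwise disjoint triangles) in `G`. -/
noncomputable def disjTriFamCount {V : Type u} (G : SimpleGraph V) (l : ℕ) : ℕ :=
  {S : Finset (Finset V) | S.card = l ∧ (∀ T ∈ S, G.IsNClique 3 T) ∧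
    (S : Set (Finset V)).Pairwise fun T T' => Disjoint T T'}.ncard

section Aux

variable {α : Type u} {F : SimpleGraph α}

lemma hasDisjCopies_mono {β : Type v} {G : SimpleGraph β} {a b : ℕ}
    (h : HasDisjCopies F G a) (hba : b ≤ a) : HasDisjCopies F G b := by
  obtain ⟨c, hc⟩ := h
  exact ⟨fun i => c (Fin.castLE hba i), fun i j hij =>
    hc _ _ (fun hcontra => hij (Fin.castLE_injective hba hcontra))⟩

lemma hasDisjCopies_zero {β : Type v} (G : SimpleGraph β) : HasDisjCopies F G 0 :=
  ⟨Fin.elim0, fun i => i.elim0⟩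

/-- An F-free graph on a fintype has at most `exNum (card V) F` edges. -/
lemma edge_card_le_exNum [Fintype α] {V : Type} [Fintype V] (G : SimpleGraph V)
    (hfree : ¬ Contains F G) : G.edgeSet.ncard ≤ exNum (Fintype.card V) F := by
  classical
  set N := Fintype.card V
  let e : V ≃ Fin N := Fintype.equivFin V
  let G' : SimpleGraph (Fin N) := G.map e.toEmbedding
  have hiso : G ≃g G' := SimpleGraph.Iso.map e G
  have hcard : G.edgeSet.ncard = G'.edgeSet.ncard := by
    rw [← Nat.card_coe_set_eq, ← Nat.card_coe_set_eq]
    exact Nat.card_congr hiso.mapEdgeSet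
  have hfree' : ¬ Contains F G' := by
    rintro ⟨φ⟩
    refine hfree ⟨⟨fun a => e.symm (φ.toFun a), fun a b hab => φ.inj (e.symm.injective hab), ?_⟩⟩
    intro a b hab
    show G.Adj (e.symm (φ.toFun a)) (e.symm (φ.toFun b))
    obtain ⟨x, y, hxy, hx, hy⟩ := (SimpleGraph.map_adj _ _ _ _).mp (φ.adj hab)
    have hx' : e.symm (φ.toFun a) = x := by rw [← hx]; simp
    have hy' : e.symm (φ.toFun b) = y := by rw [← hy]; simp
    rw [hx', hy']; exact hxy
  have hbdd : BddAbove {m : ℕ | ∃ G : SimpleGraph (Fin N), ¬ Contains F G ∧ m = G.edgeSet.ncard} := by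
    refine ⟨N.choose 2, fun m hm => ?_⟩
    obtain ⟨H, _, rfl⟩ := hm
    have : H.edgeSet.ncard = H.edgeFinset.card := by
      rw [SimpleGraph.edgeFinset, Set.ncard_eq_toFinset_card']
    rw [this]
    simpa using H.card_edgeFinset_le_card_choose_two
  rw [hcard]
  exact le_csSup hbdd ⟨G', hfree', rfl⟩

end Aux

lemma filter_le_induce {n : ℕ} (G : SimpleGraph (Fin n)) (s : Finset (Fin n))
    [Fintype G.edgeSet] [Fintype (G.induce (↑s : Set (Fin n))).edgeSet] :
    (G.edgeFinset.filter fun e => ∀ x ∈ e, x ∈ s).card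
      ≤ (G.induce (↑s : Set (Fin n))).edgeFinset.card := by
  classical
  have hsub : (G.edgeFinset.filter fun e => ∀ x ∈ e, x ∈ s) ⊆
      (G.induce (↑s : Set (Fin n))).edgeFinset.image
        (Sym2.map (fun x : (↑s : Set (Fin n)) => (x : Fin n))) := by
    intro e
    induction e using Sym2.ind with
    | _ a b =>
      intro he
      rw [Finset.mem_filter] at he
      obtain ⟨he1, he2⟩ := he
      have ha : a ∈ s := he2 a (by simp)
      have hb : b ∈ s := he2 b (by simp)
      have hadj : G.Adj a b := by rwa [SimpleGraph.mem_edgeFinset, SimpleGraph.mem_edgeSet] at he1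
      refine Finset.mem_image.mpr ⟨s(⟨a, ha⟩, ⟨b, hb⟩), ?_, by simp⟩
      rw [SimpleGraph.mem_edgeFinset, SimpleGraph.mem_edgeSet]
      exact hadj
  exact (Finset.card_le_card hsub).trans Finset.card_image_le

/-- Gorgol's bound. -/
theorem stmt1 {α : Type u} [Fintype α] (F : SimpleGraph α) (hconn : F.Connected)
    (hF : ∃ a b : α, F.Adj a b) (f k n : ℕ) (hf : f = Fintype.card α) (hk : 1 ≤ k)
    (hn : k * f ≤ n) (G : SimpleGraph (Fin n)) (hfree : ¬ HasDisjCopies F G k) :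
    G.edgeSet.ncard ≤
      exNum (n - (k - 1) * f) F + ((k - 1) * f).choose 2
        + (k - 1) * f * (n - (k - 1) * f) := by
  classical
  set m := (k - 1) * f with hm
  have hmn : m ≤ n := le_trans (Nat.mul_le_mul_right f (Nat.sub_le k 1)) hn
  -- maximal number of disjoint copies
  have hP0 : HasDisjCopies F G 0 := hasDisjCopies_zero G
  set t := Nat.findGreatest (fun t => HasDisjCopies F G t) (k - 1) with ht
  have hPt : HasDisjCopies F G t := Nat.findGreatest_spec (Nat.zero_le _) hP0
  have htk : t ≤ k - 1 := Nat.findGreatest_le _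
  have hnot : ¬ HasDisjCopies F G (t + 1) := by
    rcases lt_or_ge t (k - 1) with h | h
    · exact Nat.findGreatest_is_greatest (Nat.lt_succ_self t) h
    · have h2 : t + 1 = k := by omega
      rw [h2]; exact hfree
  obtain ⟨c, hc⟩ := hPt
  -- the set covered by the copies
  set S0 : Finset (Fin n) :=
    Finset.univ.biUnion (fun i : Fin t => Finset.univ.image (c i).toFun) with hS0
  have hS0card : S0.card = t * f := by
    rw [hS0, Finset.card_biUnion]
    · rw [Finset.sum_congr rfl
        (fun i _ => Finset.card_image_of_injective Finset.univ (c i).inj)]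
      simp [hf, mul_comm]
    · intro i _ j _ hij
      rw [Function.onFun, Finset.disjoint_left]
      intro x hx hx'
      simp only [Finset.mem_image, Finset.mem_univ, true_and] at hx hx'
      obtain ⟨a, ha⟩ := hx; obtain ⟨b, hb⟩ := hx'
      exact Set.disjoint_left.mp (hc i j hij) ⟨a, ha⟩ ⟨b, hb⟩
  have hS0m : S0.card ≤ m := by rw [hS0card, hm]; exact Nat.mul_le_mul_right f htk
  obtain ⟨S, hS0S, hScard⟩ :=
    Finset.exists_superset_card_eq hS0m (by simpa using hmn)
  have hSc : Sᶜ.card = n - m := by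
    rw [Finset.card_compl, hScard]; simp
  -- the induced graph outside S is F-free
  have hfree' : ¬ Contains F (G.induce (↑(Sᶜ) : Set (Fin n))) := by
    rintro ⟨φ⟩
    apply hnot
    let hnew : GraphCopy F G :=
      ⟨fun a => (φ.toFun a : Fin n),
       fun a b hab => φ.inj (Subtype.val_injective hab),
       fun hab => φ.adj hab⟩
    have hrange_new : ∀ x ∈ Set.range hnew.toFun, x ∉ S := by
      rintro x ⟨a, rfl⟩
      show (φ.toFun a : Fin n) ∉ S
      have h2 := (φ.toFun a).2
      simpa using h2
    have hrange_old : ∀ (j : Fin t), ∀ x ∈ Set.range (c j).toFun, x ∈ S := by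
      rintro j x ⟨a, rfl⟩
      apply hS0S
      exact Finset.mem_biUnion.mpr
        ⟨j, Finset.mem_univ _, Finset.mem_image.mpr ⟨a, Finset.mem_univ _, rfl⟩⟩
    refine ⟨fun i => Fin.lastCases hnew (fun j => c j) i, ?_⟩
    intro i j
    induction i using Fin.lastCases with
    | last =>
      induction j using Fin.lastCases with
      | last => intro hij; exact absurd rfl hij
      | cast j' =>
        intro _
        simp only [Fin.lastCases_last, Fin.lastCases_castSucc]
        rw [Set.disjoint_left]
        intro x hx hx'
        exact hrange_new x hx (hrange_old j' x hx')
    | cast i' =>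
      induction j using Fin.lastCases with
      | last =>
        intro _
        simp only [Fin.lastCases_last, Fin.lastCases_castSucc]
        rw [Set.disjoint_right]
        intro x hx hx'
        exact hrange_new x hx (hrange_old i' x hx')
      | cast j' =>
        intro hij
        simp only [Fin.lastCases_castSucc]
        exact hc i' j' (fun h => hij (congrArg Fin.castSucc h))
  -- edge counting
  have hedge : G.edgeSet.ncard = G.edgeFinset.card := by
    rw [SimpleGraph.edgeFinset, Set.ncard_eq_toFinset_card']
  set p : Sym2 (Fin n) → Prop := fun e => ∀ x ∈ e, x ∈ Sᶜ with hp
  set q : Sym2 (Fin n) → Prop := fun e => ∀ x ∈ e, x ∈ S with hq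
  have hsplit : (G.edgeFinset.filter p).card
      + (G.edgeFinset.filter (fun e => ¬ p e)).card = G.edgeFinset.card :=
    Finset.card_filter_add_card_filter_not _
  set A := G.edgeFinset.filter (fun e => ¬ p e) with hA
  have hsplit2 : (A.filter q).card + (A.filter (fun e => ¬ q e)).card = A.card :=
    Finset.card_filter_add_card_filter_not _
  -- bound 1 : edges outside S
  have hb1 : (G.edgeFinset.filter p).card ≤ exNum (n - m) F := by
    refine (filter_le_induce G Sᶜ).trans ?_
    have h3 := edge_card_le_exNum (F := F) (G.induce (↑(Sᶜ) : Set (Fin n))) hfree'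
    have h2 : (G.induce (↑(Sᶜ) : Set (Fin n))).edgeFinset.card
        = (G.induce (↑(Sᶜ) : Set (Fin n))).edgeSet.ncard := by
      rw [SimpleGraph.edgeFinset, Set.ncard_eq_toFinset_card']
    have h4 : Fintype.card (↑(Sᶜ) : Set (Fin n)) = n - m := by
      rw [← hSc]; exact Fintype.card_coe _
    rw [h2]
    rw [h4] at h3
    exact h3
  -- bound 2 : edges inside S
  have hb2 : (A.filter q).card ≤ m.choose 2 := by
    have hsub : A.filter q ⊆ G.edgeFinset.filter q := by
      intro e he
      rw [Finset.mem_filter] at he ⊢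
      rw [hA, Finset.mem_filter] at he
      exact ⟨he.1.1, he.2⟩
    refine (Finset.card_le_card hsub).trans ?_
    refine (filter_le_induce G S).trans ?_
    have h5 := (G.induce (↑S : Set (Fin n))).card_edgeFinset_le_card_choose_two
    have h4 : Fintype.card (↑S : Set (Fin n)) = m := by
      rw [← hScard]; exact Fintype.card_coe _
    rwa [h4] at h5
  -- bound 3 : cross edges
  have hb3 : (A.filter (fun e => ¬ q e)).card ≤ m * (n - m) := by
    have hsub : A.filter (fun e => ¬ q e) ⊆
        (S ×ˢ Sᶜ).image (fun z => s(z.1, z.2)) := by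
      intro e
      induction e using Sym2.ind with
      | _ a b =>
        intro he
        rw [Finset.mem_filter, hA, Finset.mem_filter, hp, hq] at he
        obtain ⟨⟨_, hnp⟩, hnq⟩ := he
        have hnp' : ∃ x ∈ s(a, b), x ∈ S := by
          by_contra hcon
          push_neg at hcon
          exact hnp (fun x hx => Finset.mem_compl.mpr (hcon x hx))
        have hnq' : ∃ x ∈ s(a, b), x ∉ S := by
          by_contra hcon
          push_neg at hcon
          exact hnq hcon
        obtain ⟨x, hxe, hxS⟩ := hnp'
        obtain ⟨y, hye, hyS⟩ := hnq'
        rw [Sym2.mem_iff] at hxe hye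
        by_cases ha : a ∈ S
        · have hb : b ∉ S := by
            rcases hye with rfl | rfl
            · exact absurd ha hyS
            · exact hyS
          exact Finset.mem_image.mpr ⟨(a, b),
            Finset.mem_product.mpr ⟨ha, Finset.mem_compl.mpr hb⟩, rfl⟩
        · have hb : b ∈ S := by
            rcases hxe with rfl | rfl
            · exact absurd hxS ha
            · exact hxS
          exact Finset.mem_image.mpr ⟨(b, a),
            Finset.mem_product.mpr ⟨hb, Finset.mem_compl.mpr ha⟩, Sym2.eq_swap⟩
    refine (Finset.card_le_card hsub).trans ?_
    refine Finset.card_image_le.trans ?_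
    rw [Finset.card_product, hScard, hSc]
  -- combine
  rw [hedge, ← hsplit, ← hsplit2]
  omega
end

section
/- Let F_1, ..., F_k be graphs, each with at least one edge, and let F be their vertex-disjoint union. There exists a constant C (depending on the F_i only) such that for all n, every n-vertex F-free graph has at most max_{1≤i≤k} ex(n, F_i) + C·n edges. -/
open SimpleGraph

universe u v

/-- The graph `G` with all edges meeting `S` removed. -/
def avoidGraph {β : Type v} (G : SimpleGraph β) (S : Finset β) : SimpleGraph β where
  Adj x y := G.Adj x y ∧ x ∉ S ∧ y ∉ S
  symm := ⟨fun _ _ h => ⟨h.1.symm, h.2.2, h.2.1⟩⟩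
  loopless := ⟨fun x h => G.loopless.irrefl x h.1⟩

lemma avoidGraph_adj {β : Type v} (G : SimpleGraph β) (S : Finset β) (x y : β) :
    (avoidGraph G S).Adj x y ↔ G.Adj x y ∧ x ∉ S ∧ y ∉ S := Iff.rfl

lemma edge_ncard_le_sym2 {n : ℕ} (H : SimpleGraph (Fin n)) :
    H.edgeSet.ncard ≤ Fintype.card (Sym2 (Fin n)) := by
  calc H.edgeSet.ncard ≤ (Set.univ : Set (Sym2 (Fin n))).ncard :=
        Set.ncard_le_ncard (Set.subset_univ _) Set.finite_univ
    _ = Fintype.card (Sym2 (Fin n)) := by rw [Set.ncard_univ, Nat.card_eq_fintype_card]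

lemma le_exNum {n : ℕ} {α : Type u} (F : SimpleGraph α) (H : SimpleGraph (Fin n))
    (h : ¬ Contains F H) : H.edgeSet.ncard ≤ exNum n F := by
  apply le_csSup
  · exact ⟨Fintype.card (Sym2 (Fin n)), by
      rintro m ⟨G, -, rfl⟩; exact edge_ncard_le_sym2 G⟩
  · exact ⟨H, h, rfl⟩

/-- Greedy embedding: if we cannot find pairwise disjoint copies of all the `F i`
avoiding `S`, then some `F j` has no copy avoiding a set `S'` of bounded size. -/
lemma greedy {n : ℕ} (G : SimpleGraph (Fin n)) :
    ∀ (k : ℕ) (V : Fin k → Type u) (F : ∀ i, SimpleGraph (V i)),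
      (∀ i, Finite (V i)) → ∀ (S : Finset (Fin n)),
    (¬ ∃ c : ∀ i, GraphCopy (F i) G, (∀ i x, (c i).toFun x ∉ S) ∧
        ∀ i j, i ≠ j → Disjoint (Set.range (c i).toFun) (Set.range (c j).toFun)) →
    ∃ (j : Fin k) (S' : Finset (Fin n)), S ⊆ S' ∧
      S'.card ≤ S.card + ∑ i, Nat.card (V i) ∧
      ¬ ∃ c : GraphCopy (F j) G, ∀ x, c.toFun x ∉ S' := by
  intro k
  induction k with
  | zero =>
    intro V F hfin S h
    exact absurd ⟨fun i => i.elim0, fun i => i.elim0, fun i => i.elim0⟩ h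
  | succ k ih =>
    intro V F hfin S h
    by_cases hlast : ∃ c : GraphCopy (F (Fin.last k)) G, ∀ x, c.toFun x ∉ S
    · obtain ⟨c₀, hc₀⟩ := hlast
      haveI : Fintype (V (Fin.last k)) := Fintype.ofFinite _
      set T : Finset (Fin n) := S ∪ Finset.univ.image c₀.toFun with hT
      have hST : S ⊆ T := Finset.subset_union_left
      have hIm : ∀ z, c₀.toFun z ∈ T := fun z =>
        Finset.mem_union_right _ (Finset.mem_image.2 ⟨z, Finset.mem_univ z, rfl⟩)
      have hprem : ¬ ∃ c : ∀ i : Fin k, GraphCopy (F i.castSucc) G,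
          (∀ i x, (c i).toFun x ∉ T) ∧
          ∀ i j, i ≠ j →
            Disjoint (Set.range (c i).toFun) (Set.range (c j).toFun) := by
        rintro ⟨c, hcT, hdisj⟩
        apply h
        refine ⟨Fin.lastCases c₀ c, ?_, ?_⟩
        · intro i x
          induction i using Fin.lastCases with
          | last => simp only [Fin.lastCases_last]; exact hc₀ x
          | cast i => simp only [Fin.lastCases_castSucc]; exact fun hx => hcT i x (hST hx)
        · have hd0 : ∀ i : Fin k,
              Disjoint (Set.range c₀.toFun) (Set.range (c i).toFun) := by
            intro i
            rw [Set.disjoint_left]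
            rintro a ⟨z, rfl⟩ ⟨y, hy⟩
            exact hcT i y (hy ▸ hIm z)
          intro i j hij
          induction i using Fin.lastCases with
          | last =>
            induction j using Fin.lastCases with
            | last => exact absurd rfl hij
            | cast j =>
              simp only [Fin.lastCases_last, Fin.lastCases_castSucc]; exact hd0 j
          | cast i =>
            induction j using Fin.lastCases with
            | last =>
              simp only [Fin.lastCases_last, Fin.lastCases_castSucc]; exact (hd0 i).symm
            | cast j =>
              simp only [Fin.lastCases_castSucc]
              exact hdisj i j (fun e => hij (by rw [e]))
      obtain ⟨j, S', hTS', hcard, hno⟩ :=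
        ih (fun i => V i.castSucc) (fun i => F i.castSucc) (fun i => hfin _) T hprem
      refine ⟨j.castSucc, S', hST.trans hTS', ?_, hno⟩
      have hTcard : T.card ≤ S.card + Nat.card (V (Fin.last k)) := by
        calc T.card ≤ S.card + (Finset.univ.image c₀.toFun).card :=
              Finset.card_union_le _ _
          _ ≤ S.card + Nat.card (V (Fin.last k)) := by
              gcongr
              calc (Finset.univ.image c₀.toFun).card ≤ Finset.univ.card :=
                    Finset.card_image_le
                _ = Nat.card (V (Fin.last k)) := by
                    rw [Finset.card_univ, Nat.card_eq_fintype_card]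
      calc S'.card ≤ T.card + ∑ i : Fin k, Nat.card (V i.castSucc) := hcard
        _ ≤ S.card + Nat.card (V (Fin.last k))
            + ∑ i : Fin k, Nat.card (V i.castSucc) := by gcongr
        _ = S.card + ∑ i : Fin (k + 1), Nat.card (V i) := by
            rw [Fin.sum_univ_castSucc]; ring
    · exact ⟨Fin.last k, S, le_refl S, Nat.le_add_right _ _, hlast⟩

/-- Remapping: a copy of `F` into `avoidGraph G S` can be turned into a copy of `F`
into `G` entirely avoiding `S`, provided `n` is large enough. -/
lemma remap {n : ℕ} {α : Type u} [Fintype α] (F : SimpleGraph α) (G : SimpleGraph (Fin n))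
    (S : Finset (Fin n)) (hn : S.card + 2 * Fintype.card α ≤ n)
    (c : GraphCopy F (avoidGraph G S)) :
    ∃ c' : GraphCopy F G, ∀ x, c'.toFun x ∉ S := by
  classical
  set A : Finset α := Finset.univ.filter (fun v => c.toFun v ∈ S) with hA
  set T : Finset (Fin n) := (S ∪ Finset.univ.image c.toFun)ᶜ with hTdef
  have hTmem : ∀ x ∈ T, x ∉ S ∧ x ∉ Finset.univ.image c.toFun := by
    intro x hx
    rw [hTdef, Finset.mem_compl, Finset.mem_union] at hx
    push_neg at hx
    exact hx
  have hcard : A.card ≤ T.card := by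
    have h1 : A.card ≤ Fintype.card α := by
      calc A.card ≤ Finset.univ.card := Finset.card_filter_le _ _
        _ = Fintype.card α := Finset.card_univ
    have h2 : (S ∪ Finset.univ.image c.toFun).card ≤ S.card + Fintype.card α := by
      calc (S ∪ Finset.univ.image c.toFun).card
          ≤ S.card + (Finset.univ.image c.toFun).card := Finset.card_union_le _ _
        _ ≤ S.card + Fintype.card α := by
            gcongr
            calc (Finset.univ.image c.toFun).card ≤ Finset.univ.card :=
                  Finset.card_image_le
              _ = Fintype.card α := Finset.card_univ
    have h3 : T.card = n - (S ∪ Finset.univ.image c.toFun).card := by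
      rw [hTdef, Finset.card_compl, Fintype.card_fin]
    omega
  obtain ⟨f⟩ : Nonempty (↥A ↪ ↥T) := by
    apply Function.Embedding.nonempty_of_card_le
    simpa [Fintype.card_coe] using hcard
  set φ : α → Fin n := fun v => if h : v ∈ A then (f ⟨v, h⟩ : Fin n) else c.toFun v with hφ
  have hφ_notS : ∀ v, φ v ∉ S := by
    intro v
    by_cases h : v ∈ A
    · simp only [hφ, dif_pos h]
      exact (hTmem _ (f ⟨v, h⟩).2).1
    · simp only [hφ, dif_neg h]
      intro hmem
      exact h (Finset.mem_filter.2 ⟨Finset.mem_univ v, hmem⟩)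
  have hφ_inj : Function.Injective φ := by
    intro a b hab
    by_cases ha : a ∈ A <;> by_cases hb : b ∈ A
    · simp only [hφ, dif_pos ha, dif_pos hb] at hab
      have := f.injective (Subtype.ext hab)
      exact congrArg Subtype.val this
    · exfalso
      simp only [hφ, dif_pos ha, dif_neg hb] at hab
      exact (hTmem _ (f ⟨a, ha⟩).2).2
        (hab ▸ Finset.mem_image.2 ⟨b, Finset.mem_univ b, rfl⟩)
    · exfalso
      simp only [hφ, dif_neg ha, dif_pos hb] at hab
      exact (hTmem _ (f ⟨b, hb⟩).2).2
        (hab ▸ Finset.mem_image.2 ⟨a, Finset.mem_univ a, rfl⟩)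
    · simp only [hφ, dif_neg ha, dif_neg hb] at hab
      exact c.inj hab
  have hφ_adj : ∀ {a b : α}, F.Adj a b → G.Adj (φ a) (φ b) := by
    intro a b hab
    obtain ⟨hG, haS, hbS⟩ := c.adj hab
    have ha : a ∉ A := fun h => haS (Finset.mem_filter.1 h).2
    have hb : b ∉ A := fun h => hbS (Finset.mem_filter.1 h).2
    simpa only [hφ, dif_neg ha, dif_neg hb] using hG
  exact ⟨⟨φ, hφ_inj, hφ_adj⟩, hφ_notS⟩

lemma edges_split {n : ℕ} (G : SimpleGraph (Fin n)) (S : Finset (Fin n)) :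
    G.edgeSet.ncard ≤ (avoidGraph G S).edgeSet.ncard + S.card * n := by
  classical
  set B : Finset (Sym2 (Fin n)) :=
    S.biUnion (fun v => Finset.univ.image (fun w => s(v, w))) with hB
  have hsub : G.edgeSet ⊆ (avoidGraph G S).edgeSet ∪ ↑B := by
    intro e he
    induction e with
    | _ x y =>
      rw [SimpleGraph.mem_edgeSet] at he
      by_cases hx : x ∈ S
      · right
        exact Finset.mem_coe.2 (Finset.mem_biUnion.2
          ⟨x, hx, Finset.mem_image.2 ⟨y, Finset.mem_univ y, rfl⟩⟩)
      · by_cases hy : y ∈ S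
        · right
          refine Finset.mem_coe.2 (Finset.mem_biUnion.2
            ⟨y, hy, Finset.mem_image.2 ⟨x, Finset.mem_univ x, ?_⟩⟩)
          exact Sym2.eq_swap
        · left
          exact ((avoidGraph G S).mem_edgeSet).2 ⟨he, hx, hy⟩
  have hBcard : (↑B : Set (Sym2 (Fin n))).ncard ≤ S.card * n := by
    rw [Set.ncard_coe_finset]
    calc B.card ≤ ∑ v ∈ S, (Finset.univ.image (fun w => s(v, w))).card :=
          Finset.card_biUnion_le
      _ ≤ ∑ _v ∈ S, n := by
          apply Finset.sum_le_sum
          intro v _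
          calc (Finset.univ.image (fun w => s(v, w))).card
              ≤ (Finset.univ : Finset (Fin n)).card := Finset.card_image_le
            _ = n := by simp
      _ = S.card * n := by rw [Finset.sum_const, smul_eq_mul]
  calc G.edgeSet.ncard ≤ ((avoidGraph G S).edgeSet ∪ ↑B).ncard :=
        Set.ncard_le_ncard hsub (Set.toFinite _)
    _ ≤ (avoidGraph G S).edgeSet.ncard + (↑B : Set (Sym2 (Fin n))).ncard :=
        Set.ncard_union_le _ _
    _ ≤ (avoidGraph G S).edgeSet.ncard + S.card * n := by gcongr

/-- If `F` is the vertex-disjoint union of `F_1, …, F_k` (each with an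
edge), then every `n`-vertex `F`-free graph has at most `max_i ex(n, F_i) + C n` edges. -/
theorem stmt5 {k : ℕ} (hk : 1 ≤ k) {V : Fin k → Type u} (F : ∀ i, SimpleGraph (V i))
    (hF : ∀ i, ∃ a b : V i, (F i).Adj a b) :
    ∃ C : ℕ, ∀ n : ℕ, ∀ G : SimpleGraph (Fin n),
      (¬ ∃ c : ∀ i, GraphCopy (F i) G, ∀ i j : Fin k, i ≠ j →
        Disjoint (Set.range (c i).toFun) (Set.range (c j).toFun)) →
      G.edgeSet.ncard ≤ (Finset.univ.sup fun i => exNum n (F i)) + C * n := by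
  classical
  by_cases hfin : ∀ i, Finite (V i)
  · -- all parts finite
    set M : ℕ := ∑ i, Nat.card (V i) with hM
    refine ⟨2 * M + 1, ?_⟩
    intro n G h
    by_cases hn : n < 2 * (2 * M + 1)
    · -- small n: trivial bound
      have h1 : G.edgeSet.ncard ≤ Fintype.card (Sym2 (Fin n)) := edge_ncard_le_sym2 G
      have h2 : Fintype.card (Sym2 (Fin n)) = (n + 1) * n / 2 := by
        rw [Sym2.card, Fintype.card_fin, Nat.choose_two_right]; simp
      have h3 : (n + 1) * n / 2 ≤ (2 * M + 1) * n := by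
        have : (n + 1) * n ≤ 2 * ((2 * M + 1) * n) := by nlinarith
        omega
      calc G.edgeSet.ncard ≤ (2 * M + 1) * n := by omega
        _ ≤ (Finset.univ.sup fun i => exNum n (F i)) + (2 * M + 1) * n :=
            Nat.le_add_left _ _
    · -- large n: greedy + remap
      push_neg at hn
      have hprem : ¬ ∃ c : ∀ i, GraphCopy (F i) G,
          (∀ i x, (c i).toFun x ∉ (∅ : Finset (Fin n))) ∧
          ∀ i j, i ≠ j →
            Disjoint (Set.range (c i).toFun) (Set.range (c j).toFun) := by
        rintro ⟨c, -, hd⟩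
        exact h ⟨c, hd⟩
      obtain ⟨j, S', -, hcard, hno⟩ := greedy G k V F hfin ∅ hprem
      rw [Finset.card_empty, Nat.zero_add] at hcard
      haveI : Fintype (V j) := Fintype.ofFinite _
      have hVj : Fintype.card (V j) ≤ M := by
        rw [hM, ← Nat.card_eq_fintype_card]
        exact Finset.single_le_sum (f := fun i => Nat.card (V i))
          (fun i _ => Nat.zero_le _) (Finset.mem_univ j)
      have hfree : ¬ Contains (F j) (avoidGraph G S') := by
        rintro ⟨c⟩
        have hsize : S'.card + 2 * Fintype.card (V j) ≤ n := by omega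
        obtain ⟨c', hc'⟩ := remap (F j) G S' hsize c
        exact hno ⟨c', hc'⟩
      have hEx : (avoidGraph G S').edgeSet.ncard ≤ exNum n (F j) :=
        le_exNum (F j) (avoidGraph G S') hfree
      have hSup : exNum n (F j) ≤ Finset.univ.sup fun i => exNum n (F i) :=
        Finset.le_sup (f := fun i => exNum n (F i)) (Finset.mem_univ j)
      calc G.edgeSet.ncard
          ≤ (avoidGraph G S').edgeSet.ncard + S'.card * n := edges_split G S'
        _ ≤ (Finset.univ.sup fun i => exNum n (F i)) + (2 * M + 1) * n := by
            have : S'.card * n ≤ (2 * M + 1) * n := by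
              apply Nat.mul_le_mul_right; omega
            omega
  · -- some part is infinite: every graph is F j-free
    push_neg at hfin
    obtain ⟨j, hj⟩ := hfin
    refine ⟨0, ?_⟩
    intro n G _
    have hfree : ¬ Contains (F j) G := by
      rintro ⟨c⟩
      exact (not_finite_iff_infinite.mpr hj) (Finite.of_injective c.toFun c.inj)
    calc G.edgeSet.ncard ≤ exNum n (F j) := le_exNum (F j) G hfree
      _ ≤ Finset.univ.sup fun i => exNum n (F i) := Finset.le_sup (f := fun i => exNum n (F i)) (Finset.mem_univ j)
      _ ≤ (Finset.univ.sup fun i => exNum n (F i)) + 0 * n := Nat.le_add_right _ _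
end

section
/- Let F_i and F_j be graphs with at least one edge, and let G_0 be a graph on n-1 vertices containing neither F_i nor F_j as a subgraph. Let G be obtained from G_0 by adding one new universal vertex v adjacent to all vertices of G_0. Then G contains no two vertex-disjoint subgraphs, one isomorphic to F_i and one isomorphic to F_j, and the number of triangles in G is at least the number of edges of G_0. -/
open SimpleGraph

universe u v

lemma copy_avoid {α : Type u} {F : SimpleGraph α} {V : Type v} {G0 : SimpleGraph V}
    (c : GraphCopy F (gJoin (⊤ : SimpleGraph (Fin 1)) G0))
    (h : Sum.inl 0 ∉ Set.range c.toFun) : Contains F G0 := by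
  have hv : ∀ a, ∃ v, c.toFun a = Sum.inr v := by
    intro a
    cases hc : c.toFun a with
    | inl x => exact absurd ⟨a, by rw [hc]; congr; exact Subsingleton.elim x 0⟩ h
    | inr v => exact ⟨v, rfl⟩
  choose g hg using hv
  refine ⟨⟨g, ?_, ?_⟩⟩
  · intro a b hab
    apply c.inj
    rw [hg, hg, hab]
  · intro a b hab
    have := c.adj hab
    rw [hg, hg] at this
    exact this

/-- Adding a universal vertex to an `{F_i, F_j}`-free graph yields a graph
with no vertex-disjoint copies of `F_i` and `F_j`, having at least `|E(G_0)|` triangles. -/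
theorem stmt7 {α : Type u} {β : Type v} (Fi : SimpleGraph α) (Fj : SimpleGraph β)
    (hFi : ∃ a b : α, Fi.Adj a b) (hFj : ∃ a b : β, Fj.Adj a b)
    {V : Type u} [Fintype V] (n : ℕ) (hV : Fintype.card V = n - 1)
    (G0 : SimpleGraph V) (h0i : ¬ Contains Fi G0) (h0j : ¬ Contains Fj G0) :
    (¬ ∃ (ci : GraphCopy Fi (gJoin (⊤ : SimpleGraph (Fin 1)) G0))
        (cj : GraphCopy Fj (gJoin (⊤ : SimpleGraph (Fin 1)) G0)),
        Disjoint (Set.range ci.toFun) (Set.range cj.toFun))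
    ∧ G0.edgeSet.ncard ≤ ((gJoin (⊤ : SimpleGraph (Fin 1)) G0).cliqueSet 3).ncard := by
  constructor
  · rintro ⟨ci, cj, hd⟩
    by_cases hmem : Sum.inl 0 ∈ Set.range ci.toFun
    · exact h0j (copy_avoid cj (fun h => Set.disjoint_left.mp hd hmem h))
    · exact h0i (copy_avoid ci hmem)
  · classical
    set f : Sym2 V → Finset ((Fin 1) ⊕ V) :=
      fun e => Sym2.lift ⟨fun u w => {Sum.inl 0, Sum.inr u, Sum.inr w}, by
        intro u w; ext x; simp; tauto⟩ e with hf
    apply Set.ncard_le_ncard_of_injOn f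
    · intro e he
      induction e with
      | h u w =>
        simp only [SimpleGraph.mem_edgeSet] at he
        simp only [hf, Sym2.lift_mk, SimpleGraph.mem_cliqueSet_iff]
        constructor
        · intro x hx y hy hxy
          simp only [Finset.coe_insert, Set.mem_insert_iff, Finset.coe_singleton,
            Set.mem_singleton_iff] at hx hy
          rcases hx with rfl | rfl | rfl <;> rcases hy with rfl | rfl | rfl <;>
            first
              | exact absurd rfl hxy
              | trivial
              | exact he
              | exact he.symm
        · rw [Finset.card_insert_of_notMem (by simp), Finset.card_insert_of_notMem
            (by simp [he.ne])]
          simp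
    · intro e he e' he' heq
      induction e with
      | h u w =>
        induction e' with
        | h u' w' =>
          simp only [SimpleGraph.mem_edgeSet] at he he'
          simp only [hf, Sym2.lift_mk] at heq
          have h1 : (Sum.inr u : (Fin 1) ⊕ V) ∈ ({Sum.inl 0, Sum.inr u', Sum.inr w'} : Finset _) := by
            rw [← heq]; simp
          have h2 : (Sum.inr w : (Fin 1) ⊕ V) ∈ ({Sum.inl 0, Sum.inr u', Sum.inr w'} : Finset _) := by
            rw [← heq]; simp
          simp only [Finset.mem_insert, Finset.mem_singleton, Sum.inr.injEq,
            reduceCtorEq, false_or] at h1 h2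
          rw [Sym2.eq_iff]
          rcases h1 with rfl | rfl
          · rcases h2 with rfl | rfl
            · exact absurd rfl he.ne
            · left; exact ⟨rfl, rfl⟩
          · rcases h2 with rfl | rfl
            · right; exact ⟨rfl, rfl⟩
            · exact absurd rfl he.ne
end

section
/- Let s ≥ t ≥ 2 and k ≥ 2 be integers and set x = ⌈(kt - s)/(k - 1)⌉ - 1. There exists a constant C = C(s, t, k) such that every n-vertex graph with no k pairwise vertex-disjoint copies of K_t contains at most C·n^x copies of K_s. -/
open SimpleGraph

universe u v

private lemma arith_key {t ρ s k m : ℕ} (h1 : 1 ≤ m) (hm : m ≤ k)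
    (hρt : ρ ≤ t) (hkey : k * t ≤ s + (k - 1) * ρ) :
    t * m ≤ s + (m - 1) * ρ := by
  have e1 : m * t + (k - m) * t = k * t := by
    rw [← Nat.add_mul]; congr 1; omega
  have e2 : (m - 1) * ρ + (k - m) * ρ = (k - 1) * ρ := by
    rw [← Nat.add_mul]; congr 1; omega
  have e3 : (k - m) * ρ ≤ (k - m) * t := Nat.mul_le_mul_left _ hρt
  have e4 : t * m = m * t := Nat.mul_comm _ _
  omega

private lemma rho_facts {s t k x : ℕ} (hst : t ≤ s) (ht : 2 ≤ t) (hk : 2 ≤ k)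
    (hx : x = (k * t - s + k - 2) / (k - 1) - 1) :
    k * t ≤ s + (k - 1) * (x + 1) ∧ x + 1 ≤ t := by
  rcases le_or_gt (k * t) s with hle | hlt
  · have h0 : k * t - s = 0 := Nat.sub_eq_zero_of_le hle
    have hA : k * t - s + k - 2 = k - 2 := by omega
    have hq : (k - 2) / (k - 1) = 0 := Nat.div_eq_of_lt (by omega)
    have hx0 : x = 0 := by rw [hx, hA, hq]
    subst hx0
    constructor
    · calc k * t ≤ s := hle
        _ ≤ s + (k - 1) * (0 + 1) := Nat.le_add_right _ _
    · omega
  · have hk1 : 0 < k - 1 := by omega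
    have hdm := Nat.div_add_mod (k * t - s + k - 2) (k - 1)
    have hmod := Nat.mod_lt (k * t - s + k - 2) hk1
    obtain ⟨q, hq⟩ : ∃ q, (k * t - s + k - 2) / (k - 1) = q := ⟨_, rfl⟩
    obtain ⟨r, hr⟩ : ∃ r, (k * t - s + k - 2) % (k - 1) = r := ⟨_, rfl⟩
    rw [hq, hr] at hdm
    rw [hq] at hx
    rw [hr] at hmod
    have hq1 : 1 ≤ q := by
      by_contra hcon
      have h0 : q = 0 := by omega
      rw [h0, Nat.mul_zero] at hdm
      omega
    have hxq : x + 1 = q := by omega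
    have hbr : (k - 1) * (x + 1) = (k - 1) * q := by rw [hxq]
    have hqt : q ≤ t := by
      by_contra hcon
      have h3 : (k - 1) * (t + 1) ≤ (k - 1) * q := Nat.mul_le_mul_left _ (by omega)
      have h4 : (k - 1) * (t + 1) + (t + 1) = k * t + k := by
        have h5 : (k - 1) * (t + 1) + 1 * (t + 1) = k * (t + 1) := by
          rw [← Nat.add_mul]; congr 1; omega
        have h6 : k * (t + 1) = k * t + k := Nat.mul_succ k t
        omega
      omega
    exact ⟨by omega, by omega⟩


private theorem stmt10_aux (s t k x : ℕ) (hst : t ≤ s) (ht : 2 ≤ t) (hk : 2 ≤ k)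
    (hkey : k * t ≤ s + (k - 1) * (x + 1)) (hρt : x + 1 ≤ t) :
    ∀ n : ℕ, ∀ G : SimpleGraph (Fin n),
      ¬ HasDisjCopies (⊤ : SimpleGraph (Fin t)) G k →
      (G.cliqueSet s).ncard ≤ 2 ^ ((k - 1) * s) * (x + 1) * n ^ x := by
  intro n G hfree
  rcases Nat.eq_zero_or_pos n with rfl | hn
  · have hempty : G.cliqueSet s = ∅ := by
      ext S
      simp only [Set.mem_empty_iff_false, iff_false]
      intro hS
      have hc : S.card = s := hS.card_eq
      obtain ⟨a, _⟩ := Finset.card_pos.mp (by omega : 0 < S.card)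
      exact a.elim0
    rw [hempty, Set.ncard_empty]
    exact Nat.zero_le _
  by_cases hstuck : ∃ m < k, ∃ f : ℕ → Finset (Fin n),
      (∀ i < m, G.IsNClique s (f i) ∧ x + 1 ≤ ((f i) \ (Finset.range i).biUnion f).card) ∧
      ∀ S ∈ G.cliqueSet s, (S \ (Finset.range m).biUnion f).card ≤ x
  · -- counting branch
    obtain ⟨m, hmk, f, hGood, hstk⟩ := hstuck
    set W := (Finset.range m).biUnion f with hW
    have hWcard : W.card ≤ (k - 1) * s := by
      calc W.card ≤ ∑ i ∈ Finset.range m, (f i).card := Finset.card_biUnion_le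
        _ = ∑ i ∈ Finset.range m, s :=
            Finset.sum_congr rfl (fun i hi => ((hGood i (Finset.mem_range.mp hi)).1).card_eq)
        _ = m * s := by rw [Finset.sum_const, Finset.card_range, smul_eq_mul]
        _ ≤ (k - 1) * s := Nat.mul_le_mul_right _ (by omega)
    set T := (Finset.range (x + 1)).biUnion
        (fun i => Finset.powersetCard i (Finset.univ : Finset (Fin n))) with hT
    have hTbound : T.card ≤ (x + 1) * n ^ x := by
      calc T.card ≤ ∑ i ∈ Finset.range (x + 1),
            (Finset.powersetCard i (Finset.univ : Finset (Fin n))).card :=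
            Finset.card_biUnion_le
        _ ≤ ∑ _i ∈ Finset.range (x + 1), n ^ x := by
            apply Finset.sum_le_sum
            intro i hi
            rw [Finset.card_powersetCard, Finset.card_univ, Fintype.card_fin]
            calc n.choose i ≤ n ^ i := Nat.choose_le_pow n i
              _ ≤ n ^ x := Nat.pow_le_pow_right hn (by
                  have := Finset.mem_range.mp hi; omega)
        _ = (x + 1) * n ^ x := by rw [Finset.sum_const, Finset.card_range, smul_eq_mul]
    set C := (W.powerset ×ˢ T).image (fun p : Finset (Fin n) × Finset (Fin n) => p.1 ∪ p.2)
      with hC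
    have hsub : G.cliqueSet s ⊆ ↑C := by
      intro S hS
      rw [Finset.mem_coe, hC, Finset.mem_image]
      refine ⟨(S ∩ W, S \ W), ?_, ?_⟩
      · rw [Finset.mem_product]
        constructor
        · exact Finset.mem_powerset.mpr Finset.inter_subset_right
        · rw [hT, Finset.mem_biUnion]
          exact ⟨(S \ W).card, Finset.mem_range.mpr (Nat.lt_succ_of_le (hstk S hS)),
            Finset.mem_powersetCard.mpr ⟨Finset.subset_univ _, rfl⟩⟩
      · ext a
        simp only [Finset.mem_union, Finset.mem_inter, Finset.mem_sdiff]
        tauto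
    calc (G.cliqueSet s).ncard ≤ C.card := by
          rw [← Set.ncard_coe_finset]
          exact Set.ncard_le_ncard hsub (Finset.finite_toSet _)
      _ ≤ (W.powerset ×ˢ T).card := Finset.card_image_le
      _ = 2 ^ W.card * T.card := by rw [Finset.card_product, Finset.card_powerset]
      _ ≤ 2 ^ ((k - 1) * s) * ((x + 1) * n ^ x) :=
          Nat.mul_le_mul (Nat.pow_le_pow_right (by norm_num) hWcard) hTbound
      _ = 2 ^ ((k - 1) * s) * (x + 1) * n ^ x := by ring
  · -- contradiction branch: build k cliques each with ≥ x+1 new vertices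
    exfalso
    have hchain : ∀ M, M ≤ k → ∃ f : ℕ → Finset (Fin n),
        ∀ i < M, G.IsNClique s (f i) ∧ x + 1 ≤ ((f i) \ (Finset.range i).biUnion f).card := by
      intro M
      induction M with
      | zero => exact fun _ => ⟨fun _ => ∅, fun i hi => absurd hi (Nat.not_lt_zero i)⟩
      | succ M ih =>
        intro hMk
        obtain ⟨f, hf⟩ := ih (by omega)
        by_cases hex : ∃ S ∈ G.cliqueSet s, x + 1 ≤ (S \ (Finset.range M).biUnion f).card
        · obtain ⟨S, hS1, hS2⟩ := hex
          refine ⟨fun i => if i = M then S else f i, ?_⟩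
          intro i hi
          have hb : (Finset.range i).biUnion (fun j => if j = M then S else f j)
              = (Finset.range i).biUnion f := by
            apply Finset.biUnion_congr rfl
            intro j hj
            rw [Finset.mem_range] at hj
            rw [if_neg (by omega)]
          rcases Nat.lt_or_ge i M with hiM | hiM
          · simp only [hb, if_neg (show ¬ i = M by omega)]
            exact hf i hiM
          · have hiM' : i = M := by omega
            subst hiM'
            simp only [hb, if_pos rfl]
            exact ⟨hS1, hS2⟩
        · push_neg at hex
          exact absurd ⟨M, by omega, f, hf, fun S hS => by
            have := hex S hS; omega⟩ hstuck
    obtain ⟨f, hf⟩ := hchain k le_rfl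
    -- lower bound on unions
    have hub : ∀ c : ℕ, ∀ J : Finset ℕ, J.card = c + 1 → J ⊆ Finset.range k →
        s + c * (x + 1) ≤ (J.biUnion f).card := by
      intro c
      induction c with
      | zero =>
        intro J hJ hJk
        obtain ⟨i, rfl⟩ := Finset.card_eq_one.mp hJ
        have hik : i < k := Finset.mem_range.mp (hJk (Finset.mem_singleton_self i))
        rw [Finset.singleton_biUnion]
        have := (hf i hik).1.card_eq
        omega
      | succ c ih =>
        intro J hJ hJk
        have hne : J.Nonempty := Finset.card_pos.mp (by omega)
        have hiJ : J.max' hne ∈ J := J.max'_mem hne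
        set i := J.max' hne with hi
        set J' := J.erase i with hJ'
        have hJ'c : J'.card = c + 1 := by rw [hJ', Finset.card_erase_of_mem hiJ, hJ]; omega
        have hJ'k : J' ⊆ Finset.range k := (Finset.erase_subset _ _).trans hJk
        have hIH := ih J' hJ'c hJ'k
        have hik : i < k := Finset.mem_range.mp (hJk hiJ)
        have hlt : ∀ j ∈ J', j < i := by
          intro j hj
          exact lt_of_le_of_ne (J.le_max' j (Finset.mem_of_mem_erase hj))
            (Finset.ne_of_mem_erase hj)
        have hA : J'.biUnion f ⊆ (Finset.range i).biUnion f := by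
          apply Finset.biUnion_subset_biUnion_of_subset_left
          intro j hj
          exact Finset.mem_range.mpr (hlt j hj)
        have hdisj : Disjoint (J'.biUnion f) (f i \ (Finset.range i).biUnion f) :=
          Finset.disjoint_sdiff.mono_left hA
        have hsub2 : (J'.biUnion f) ∪ (f i \ (Finset.range i).biUnion f) ⊆ J.biUnion f := by
          apply Finset.union_subset
          · exact Finset.biUnion_subset_biUnion_of_subset_left _ (Finset.erase_subset _ _)
          · exact Finset.sdiff_subset.trans (Finset.subset_biUnion_of_mem f hiJ)
        have hcard := Finset.card_le_card hsub2
        rw [Finset.card_union_of_disjoint hdisj] at hcard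
        have hρ := (hf i hik).2
        have hmul : (c + 1) * (x + 1) = c * (x + 1) + (x + 1) := by ring
        omega
    -- Hall condition
    have hHall : ∀ E : Finset (Fin k × Fin t),
        E.card ≤ (E.biUnion fun p => f p.1).card := by
      intro E
      rcases E.eq_empty_or_nonempty with rfl | hEne
      · simp
      set P := E.image (fun p : Fin k × Fin t => (p.1 : ℕ)) with hP
      have hPne : P.Nonempty := hEne.image _
      have hPk : P ⊆ Finset.range k := by
        intro a ha
        obtain ⟨p, _, rfl⟩ := Finset.mem_image.mp ha
        exact Finset.mem_range.mpr p.1.isLt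
      have hbi : E.biUnion (fun p => f p.1) = P.biUnion f := by
        rw [hP, Finset.image_biUnion]
      have hfib : E.card ≤ P.card * t := by
        rw [Finset.card_eq_sum_card_fiberwise
          (fun p hp => Finset.mem_image_of_mem (fun p : Fin k × Fin t => (p.1 : ℕ)) hp)]
        calc ∑ a ∈ P, (E.filter fun p => (p.1 : ℕ) = a).card
            ≤ ∑ _a ∈ P, t := by
              apply Finset.sum_le_sum
              intro a _
              have : ((E.filter fun p => (p.1 : ℕ) = a).card
                  ≤ (Finset.univ : Finset (Fin t)).card) := by
                apply Finset.card_le_card_of_injOn (fun p => p.2)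
                  (fun p _ => Finset.mem_univ _)
                intro p hp q hq h2
                have hp1 := (Finset.mem_filter.mp hp).2
                have hq1 := (Finset.mem_filter.mp hq).2
                have : p.1 = q.1 := Fin.ext (by rw [hp1, hq1])
                exact Prod.ext this h2
              simpa using this
          _ = P.card * t := by rw [Finset.sum_const, smul_eq_mul]
      have hm1 : 1 ≤ P.card := Finset.card_pos.mpr hPne
      have hmk : P.card ≤ k := by
        have := Finset.card_le_card hPk
        rwa [Finset.card_range] at this
      have h1 : t * P.card ≤ s + (P.card - 1) * (x + 1) := arith_key hm1 hmk hρt hkey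
      have h2 := hub (P.card - 1) P (by omega) hPk
      rw [hbi]
      calc E.card ≤ P.card * t := hfib
        _ = t * P.card := Nat.mul_comm _ _
        _ ≤ s + (P.card - 1) * (x + 1) := h1
        _ ≤ (P.biUnion f).card := h2
    obtain ⟨F, hFinj, hFmem⟩ := (Finset.all_card_le_biUnion_card_iff_exists_injective
      (fun p : Fin k × Fin t => f p.1)).mp hHall
    apply hfree
    refine ⟨fun i =>
      { toFun := fun l => F (i, l)
        inj := by
          intro a b hab
          exact (Prod.ext_iff.mp (hFinj hab)).2
        adj := by
          intro a b hab
          rw [top_adj] at hab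
          have hclq := (hf i i.isLt).1.isClique
          have h1 : F (i, a) ∈ (f (i : ℕ) : Set (Fin n)) := hFmem (i, a)
          have h2 : F (i, b) ∈ (f (i : ℕ) : Set (Fin n)) := hFmem (i, b)
          have hne : F (i, a) ≠ F (i, b) := by
            intro h
            exact hab (Prod.ext_iff.mp (hFinj h)).2
          exact hclq h1 h2 hne }, ?_⟩
    intro i j hij
    rw [Set.disjoint_left]
    rintro a ⟨l1, rfl⟩ ⟨l2, hl2⟩
    exact hij ((Prod.ext_iff.mp (hFinj hl2)).1).symm


/-- With `x = ⌈(kt-s)/(k-1)⌉ - 1`, every `n`-vertex graph with no `k`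
disjoint copies of `K_t` has at most `C n^x` copies of `K_s`. -/
theorem stmt10 (s t k x : ℕ) (hst : t ≤ s) (ht : 2 ≤ t) (hk : 2 ≤ k)
    (hx : x = (k * t - s + k - 2) / (k - 1) - 1) :
    ∃ C : ℕ, ∀ n : ℕ, ∀ G : SimpleGraph (Fin n),
      ¬ HasDisjCopies (⊤ : SimpleGraph (Fin t)) G k →
      (G.cliqueSet s).ncard ≤ C * n ^ x := by
  obtain ⟨hkey, hρt⟩ := rho_facts hst ht hk hx
  exact ⟨2 ^ ((k - 1) * s) * (x + 1), stmt10_aux s t k x hst ht hk hkey hρt⟩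
end

section
/- Let t ≥ 2 and let G be a K_t-free graph on n vertices. Then for every s < t, the number of copies of K_s in G is at most C(t-1, s) · (n/(t-1) + 1)^s, where C(·,·) denotes the binomial coefficient. -/
open SimpleGraph

universe u v

section Aux

lemma amgm_pow (s : ℕ) (hs : 1 ≤ s) (x w : ℝ) (hx : 0 ≤ x) (hw : 0 ≤ w) :
    x ^ (s - 1) * w ≤ ((((s:ℝ) - 1) * x + w) / s) ^ s := by
  have hs0 : (0:ℝ) < s := by positivity
  have hs1 : (1:ℝ) ≤ (s:ℝ) := by exact_mod_cast hs
  have h := Real.geom_mean_le_arith_mean2_weighted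
    (w₁ := ((s:ℝ)-1)/s) (w₂ := 1/s) (p₁ := x) (p₂ := w)
    (div_nonneg (by linarith) hs0.le) (by positivity) hx hw (by field_simp; ring)
  have h2 : (x ^ (((s:ℝ)-1)/s) * w ^ ((1:ℝ)/s)) ^ (s:ℕ) ≤
      ((((s:ℝ) - 1) * x + w) / s) ^ s := by
    apply pow_le_pow_left₀ (by positivity)
    calc x ^ (((s:ℝ)-1)/s) * w ^ ((1:ℝ)/s) ≤ ((s:ℝ)-1)/s * x + 1/s * w := h
      _ = (((s:ℝ) - 1) * x + w) / s := by ring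
  refine le_trans (le_of_eq ?_) h2
  rw [mul_pow, ← Real.rpow_natCast (x ^ (((s:ℝ)-1)/s)), ← Real.rpow_natCast (w ^ ((1:ℝ)/s)),
    ← Real.rpow_mul hx, ← Real.rpow_mul hw]
  have e1 : ((s:ℝ)-1)/s * s = ((s:ℝ)-1) := by field_simp
  have e2 : (1:ℝ)/s * s = 1 := by field_simp
  rw [e1, e2, Real.rpow_one]
  congr 1
  rw [← Real.rpow_natCast x (s-1)]
  congr 1
  push_cast [hs]
  ring



lemma numineq (t s n d : ℕ) (ht : 2 ≤ t) (hs1 : 1 ≤ s) (hst : s ≤ t) (hdn : d + 1 ≤ n) :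
    ((t-1).choose s : ℝ) * ((d:ℝ)/((t:ℝ)-1)+1)^s
      + ((n - d : ℕ):ℝ) * ((t-1).choose (s-1) : ℝ) * ((d:ℝ)/((t:ℝ)-1)+1)^(s-1)
      ≤ (t.choose s : ℝ) * ((n:ℝ)/(t:ℝ) + 1)^s := by
  obtain ⟨t', rfl⟩ : ∃ t', t = t' + 1 := ⟨t-1, by omega⟩
  obtain ⟨s', rfl⟩ : ∃ s', s = s' + 1 := ⟨s-1, by omega⟩
  simp only [Nat.add_sub_cancel]
  rw [show ((t'+1:ℕ):ℝ) - 1 = (t':ℝ) from by push_cast; ring,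
      show ((t'+1:ℕ):ℝ) = (t':ℝ) + 1 from by push_cast; ring]
  have ht' : 1 ≤ t' := by omega
  have hst' : s' ≤ t' := by omega
  have hT0 : (0:ℝ) < (t':ℝ) := by exact_mod_cast ht'
  have hT1 : (0:ℝ) < (t':ℝ) + 1 := by linarith
  have hS1 : (0:ℝ) < (s':ℝ) + 1 := by positivity
  have hTS : (s':ℝ) ≤ (t':ℝ) := by exact_mod_cast hst'
  have hND : (d:ℝ) + 1 ≤ (n:ℝ) := by exact_mod_cast hdn
  have hc0 : (0:ℝ) ≤ ((t'+1).choose (s'+1) : ℝ) := by positivity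
  set X : ℝ := (d:ℝ) / (t':ℝ) + 1 with hX
  have hX0 : 0 ≤ X := by positivity
  set c : ℝ := ((t'+1).choose (s'+1) : ℝ) with hc
  set W : ℝ := (((t':ℝ) + 1 - ((s':ℝ)+1)) * X + ((s':ℝ)+1) * ((n:ℝ) - (d:ℝ))) / ((t':ℝ)+1)
    with hW
  -- binomial identities
  have h2 : (t'+1) * t'.choose s' = (t'+1).choose (s'+1) * (s'+1) := Nat.add_one_mul_choose_eq t' s'
  have hp : (t'+1).choose (s'+1) = t'.choose s' + t'.choose (s'+1) := Nat.choose_succ_succ t' s'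
  have e2 : ((t':ℝ)+1) * (t'.choose s' : ℝ) = c * ((s':ℝ)+1) := by
    rw [hc]; exact_mod_cast congrArg (Nat.cast : ℕ → ℝ) h2
  have ep : c = (t'.choose s' : ℝ) + (t'.choose (s'+1) : ℝ) := by
    rw [hc]; exact_mod_cast congrArg (Nat.cast : ℕ → ℝ) hp
  have rb : (t'.choose s' : ℝ) = ((s':ℝ)+1) * c / ((t':ℝ)+1) := by
    rw [eq_div_iff hT1.ne']; linarith
  have ra : (t'.choose (s'+1) : ℝ) = (((t':ℝ)+1) - ((s':ℝ)+1)) * c / ((t':ℝ)+1) := by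
    rw [eq_div_iff hT1.ne']; nlinarith
  have hnd : ((n - d : ℕ):ℝ) = (n:ℝ) - (d:ℝ) := by
    exact_mod_cast Nat.cast_sub (by omega)
  have hW0 : 0 ≤ W := by
    apply div_nonneg _ hT1.le
    have h1 : 0 ≤ (((t':ℝ)+1) - ((s':ℝ)+1)) * X := mul_nonneg (by linarith) hX0
    nlinarith
  have key : X ^ s' * W ≤ (((n:ℝ) + (t':ℝ))/((t':ℝ)+1)) ^ (s'+1) := by
    have h := amgm_pow (s'+1) (by omega) X W hX0 hW0
    simp only [Nat.add_sub_cancel] at h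
    refine h.trans (le_of_eq ?_)
    congr 1
    push_cast
    rw [hW, hX]
    field_simp
    ring
  calc ((t'.choose (s'+1)) : ℝ) * X^(s'+1) + ((n-d:ℕ):ℝ) * (t'.choose s' : ℝ) * X^(s')
      = c * (X ^ s' * W) := by rw [ra, rb, hnd, hW]; field_simp; ring
    _ ≤ c * ((((n:ℝ) + (t':ℝ))/((t':ℝ)+1)) ^ (s'+1)) := mul_le_mul_of_nonneg_left key hc0
    _ ≤ c * (((n:ℝ)/((t':ℝ)+1) + 1) ^ (s'+1)) := by
        apply mul_le_mul_of_nonneg_left _ hc0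
        apply pow_le_pow_left₀ (by positivity)
        rw [div_add' _ _ _ hT1.ne']
        gcongr
        linarith


open Finset

variable {V : Type*} [DecidableEq V] (G : SimpleGraph V) [DecidableRel G.Adj]

noncomputable def cnt (s : ℕ) (A : Finset V) : ℕ :=
  ((A.powersetCard s).filter (fun S : Finset V => G.IsClique (S : Set V))).card

lemma cnt_zero (A : Finset V) : cnt G 0 A = 1 := by
  rw [cnt, Finset.powersetCard_zero]
  rw [Finset.filter_true_of_mem (by simp)]
  simp

lemma cnt_one (A : Finset V) : cnt G 1 A = A.card := by
  rw [cnt, Finset.powersetCard_one]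
  rw [Finset.filter_true_of_mem, Finset.card_map]
  intro S hS
  simp only [Finset.mem_map, Function.Embedding.coeFn_mk] at hS
  obtain ⟨a, _, rfl⟩ := hS
  simp [SimpleGraph.isClique_singleton]

lemma cnt_empty (s : ℕ) (hs : s ≠ 0) : cnt G s (∅ : Finset V) = 0 := by
  rw [cnt, Finset.powersetCard_eq_empty.2 (by simp; omega)]
  simp

lemma erase_count (s : ℕ) (A : Finset V) (u : V) :
    ((A.powersetCard s).filter (fun S : Finset V => G.IsClique (S : Set V) ∧ u ∈ S)).card
      ≤ cnt G (s-1) (A.filter (fun x => G.Adj u x)) := by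
  apply Finset.card_le_card_of_injOn (fun S => S.erase u)
  · intro S hS
    simp only [Finset.mem_coe, Finset.mem_filter, Finset.mem_powersetCard] at hS ⊢
    obtain ⟨⟨hSA, hcard⟩, hclq, huS⟩ := hS
    refine ⟨⟨?_, by rw [Finset.card_erase_of_mem huS, hcard]⟩, ?_⟩
    · intro w hw
      rw [Finset.mem_erase] at hw
      rw [Finset.mem_filter]
      refine ⟨hSA hw.2, hclq (by simpa using huS) (by simpa using hw.2) (Ne.symm hw.1)⟩
    · exact hclq.subset (by simpa using Finset.erase_subset u S)
  · intro S hS S' hS' h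
    have huS : u ∈ S := (Finset.mem_filter.1 hS).2.2
    have huS' : u ∈ S' := (Finset.mem_filter.1 hS').2.2
    rw [← Finset.insert_erase huS, ← Finset.insert_erase huS']
    simp only at h
    rw [h]

lemma cnt_split (s : ℕ) (A A' : Finset V) (hA' : A' ⊆ A) :
    cnt G s A ≤ cnt G s A' +
      ∑ u ∈ A \ A',
        ((A.powersetCard s).filter (fun S : Finset V => G.IsClique (S : Set V) ∧ u ∈ S)).card := by
  have hsub : (A.powersetCard s).filter (fun S : Finset V => G.IsClique (S : Set V)) ⊆
      (A'.powersetCard s).filter (fun S : Finset V => G.IsClique (S : Set V)) ∪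
      (A \ A').biUnion (fun u =>
        (A.powersetCard s).filter (fun S : Finset V => G.IsClique (S : Set V) ∧ u ∈ S)) := by
    intro S hS
    simp only [Finset.mem_filter, Finset.mem_powersetCard] at hS
    obtain ⟨⟨hSA, hcard⟩, hclq⟩ := hS
    by_cases hSA' : S ⊆ A'
    · exact Finset.mem_union_left _ (by
        simp only [Finset.mem_filter, Finset.mem_powersetCard]
        exact ⟨⟨hSA', hcard⟩, hclq⟩)
    · obtain ⟨u, huS, huA'⟩ := Finset.not_subset.1 hSA'
      refine Finset.mem_union_right _ (Finset.mem_biUnion.2 ⟨u, ?_, ?_⟩)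
      · exact Finset.mem_sdiff.2 ⟨hSA huS, huA'⟩
      · simp only [Finset.mem_filter, Finset.mem_powersetCard]
        exact ⟨⟨hSA, hcard⟩, hclq, huS⟩
  calc cnt G s A ≤ _ := Finset.card_le_card hsub
    _ ≤ _ + _ := Finset.card_union_le _ _
    _ ≤ _ := add_le_add le_rfl Finset.card_biUnion_le



lemma aux (t : ℕ) (ht : 2 ≤ t) :
    ∀ A : Finset V,
      (∀ S ⊆ A, S.card = t → ¬ G.IsClique (S : Set V)) → ∀ s, s < t →
      (cnt G s A : ℝ) ≤ ((t-1).choose s : ℝ) * ((A.card : ℝ)/((t:ℝ)-1) + 1)^s := by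
  induction t, ht using Nat.le_induction with
  | base =>
    intro A _ s hs
    interval_cases s
    · rw [cnt_zero]; norm_num
    · rw [cnt_one]; norm_num
  | succ t ht IH =>
    intro A hA s hs
    rcases Nat.eq_zero_or_pos s with rfl | hs1
    · rw [cnt_zero]; norm_num
    rcases Finset.eq_empty_or_nonempty A with rfl | hne
    · rw [cnt_empty G s (by omega)]
      simp only [Nat.cast_zero, Finset.card_empty, zero_div, zero_add, one_pow, mul_one]
      positivity
    obtain ⟨v, hvA, hvmax⟩ := Finset.exists_max_image A
      (fun u => (A.filter (fun x => G.Adj u x)).card) hne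
    set A' : Finset V := A.filter (fun x => G.Adj v x) with hA'def
    have hA'sub : A' ⊆ A := Finset.filter_subset _ _
    have hvA' : v ∉ A' := by simp [hA'def]
    have hdn : A'.card + 1 ≤ A.card := by
      have : A' ⊂ A := (Finset.ssubset_iff_of_subset hA'sub).2 ⟨v, hvA, hvA'⟩
      exact Finset.card_lt_card this
    -- shrink lemma
    have shrink : ∀ u ∈ A, ∀ S ⊆ A.filter (fun x => G.Adj u x), S.card = t →
        ¬ G.IsClique (S : Set V) := by
      intro u hu S hS hcard hclq
      have huS : u ∉ S := by
        intro h
        exact G.irrefl (Finset.mem_filter.1 (hS h)).2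
      refine hA (insert u S) ?_ ?_ ?_
      · exact Finset.insert_subset hu (hS.trans (Finset.filter_subset _ _))
      · rw [Finset.card_insert_of_notMem huS, hcard]
      · rw [Finset.coe_insert]
        exact hclq.insert (fun b hb _ => (Finset.mem_filter.1 (hS hb)).2)
    have ht1 : (0:ℝ) < (t:ℝ) - 1 := by
      have : (2:ℝ) ≤ (t:ℝ) := by exact_mod_cast ht
      linarith
    set X : ℝ := ((A'.card : ℝ)/((t:ℝ)-1) + 1) with hXdef
    have hX0 : (0:ℝ) ≤ X := by
      have : (0:ℝ) < (t:ℝ) - 1 := by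
        have : (2:ℝ) ≤ (t:ℝ) := by exact_mod_cast ht
        linarith
      positivity
    -- bound on cnt G s A'
    have hbA' : (cnt G s A' : ℝ) ≤ ((t-1).choose s : ℝ) * X ^ s := by
      rcases Nat.lt_or_ge s t with hst | hst
      · exact IH A' (shrink v hvA) s hst
      · have hseq : s = t := by omega
        have h0 : cnt G s A' = 0 := by
          rw [cnt]
          rw [Finset.card_eq_zero, Finset.filter_eq_empty_iff]
          intro S hS
          rw [Finset.mem_powersetCard] at hS
          exact shrink v hvA S hS.1 (by omega)
        rw [h0, hseq, Nat.choose_eq_zero_of_lt (by omega)]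
        norm_num
    -- bound on each neighborhood count
    have hbu : ∀ u ∈ A \ A', (cnt G (s-1) (A.filter (fun x => G.Adj u x)) : ℝ) ≤
        ((t-1).choose (s-1) : ℝ) * X ^ (s-1) := by
      intro u hu
      have huA : u ∈ A := (Finset.mem_sdiff.1 hu).1
      refine (IH _ (shrink u huA) (s-1) (by omega)).trans ?_
      apply mul_le_mul_of_nonneg_left _ (by positivity)
      apply pow_le_pow_left₀ (add_nonneg (div_nonneg (Nat.cast_nonneg _) ht1.le) zero_le_one)
      rw [hXdef]
      have hle : ((A.filter (fun x => G.Adj u x)).card : ℝ) ≤ (A'.card : ℝ) := by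
        exact_mod_cast hvmax u huA
      gcongr
    -- assemble
    have hsplit := cnt_split G s A A' hA'sub
    have hchain : (cnt G s A : ℝ) ≤ ((t-1).choose s : ℝ) * X ^ s +
        ((A.card - A'.card : ℕ) : ℝ) * ((t-1).choose (s-1) : ℝ) * X ^ (s-1) := by
      have c1 : (cnt G s A : ℝ) ≤ (cnt G s A' : ℝ) +
          ∑ u ∈ A \ A', ((cnt G (s-1) (A.filter (fun x => G.Adj u x))) : ℝ) := by
        have : (cnt G s A : ℝ) ≤ (cnt G s A' : ℝ) +
            ∑ u ∈ A \ A',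
              (((A.powersetCard s).filter
                (fun S : Finset V => G.IsClique (S : Set V) ∧ u ∈ S)).card : ℝ) := by
          exact_mod_cast hsplit
        refine this.trans (add_le_add le_rfl (Finset.sum_le_sum ?_))
        intro u _
        exact_mod_cast erase_count G s A u
      refine c1.trans ?_
      refine add_le_add hbA' ?_
      calc ∑ u ∈ A \ A', ((cnt G (s-1) (A.filter (fun x => G.Adj u x))) : ℝ)
          ≤ ∑ _u ∈ A \ A', ((t-1).choose (s-1) : ℝ) * X ^ (s-1) := Finset.sum_le_sum hbu
        _ = ((A.card - A'.card : ℕ) : ℝ) * (((t-1).choose (s-1) : ℝ) * X ^ (s-1)) := by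
            rw [Finset.sum_const, nsmul_eq_mul, Finset.card_sdiff_of_subset hA'sub]
        _ = _ := by ring
    refine hchain.trans ?_
    have := numineq t s A.card A'.card ht hs1 (by omega) hdn
    rw [hXdef]
    rw [show (((t+1:ℕ)):ℝ) - 1 = (t:ℝ) from by push_cast; ring] at *
    simp only [Nat.add_sub_cancel]
    exact this


end Aux

/-- A `K_t`-free graph on `n` vertices has at most
`C(t-1,s)·(n/(t-1)+1)^s` copies of `K_s` for every `s < t`. -/
theorem stmt17 (t s n : ℕ) (ht : 2 ≤ t) (hst : s < t)
    (G : SimpleGraph (Fin n)) (hG : G.CliqueFree t) :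
    ((G.cliqueSet s).ncard : ℝ) ≤
      ((t - 1).choose s : ℝ) * ((n : ℝ) / ((t : ℝ) - 1) + 1) ^ s := by
  classical
  have hset : G.cliqueSet s =
      ↑((Finset.univ.powersetCard s).filter (fun S : Finset (Fin n) => G.IsClique (S : Set (Fin n)))) := by
    ext S
    simp only [SimpleGraph.mem_cliqueSet_iff, SimpleGraph.isNClique_iff, Finset.coe_filter,
      Finset.mem_powersetCard, Set.mem_setOf_eq, Finset.subset_univ, true_and]
    tauto
  have hcnt : (G.cliqueSet s).ncard = cnt G s Finset.univ := by
    rw [hset, Set.ncard_coe_finset, cnt]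
  rw [hcnt]
  have hfree : ∀ S ⊆ (Finset.univ : Finset (Fin n)), S.card = t →
      ¬ G.IsClique (S : Set (Fin n)) := by
    intro S _ hcard hclq
    exact hG S ⟨hclq, hcard⟩
  have := aux G t ht Finset.univ hfree s hst
  rwa [Finset.card_univ, Fintype.card_fin] at this
end

section
/- Let G be a graph on n vertices with no k pairwise vertex-disjoint triangles, let L be the vertex set of a maximum family of disjoint triangles in G (consisting of triangles A_1, ..., A_r with r ≤ k-1), and call a triangle of G good if it has exactly one vertex in L. Then for each i, no two vertex-disjoint good triangles of G meet A_i in two different vertices of A_i. -/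
open SimpleGraph

universe u v

/-- If `A_1, …, A_r` is a maximum family of disjoint triangles
(`r ≤ k-1`) in a graph with no `k` disjoint triangles, then no two vertex-disjoint good
triangles (triangles with exactly one vertex in `L`) meet the same `A_i` in two different
vertices. -/
theorem stmt18 {V : Type u} [Fintype V] [DecidableEq V] (G : SimpleGraph V) (k r : ℕ)
    (hk : 1 ≤ k) (hrk : r ≤ k - 1)
    (hfree : ¬ HasDisjTriangles G k)
    (A : Fin r → Finset V) (hA : ∀ i, G.IsNClique 3 (A i))
    (hdisj : ∀ i j : Fin r, i ≠ j → Disjoint (A i) (A j))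
    (hmax : ¬ ∃ B : Fin (r + 1) → Finset V, (∀ i, G.IsNClique 3 (B i)) ∧
      ∀ i j : Fin (r + 1), i ≠ j → Disjoint (B i) (B j))
    (L : Finset V) (hL : L = Finset.univ.biUnion A) :
    ∀ i : Fin r, ∀ T₁ T₂ : Finset V, G.IsNClique 3 T₁ → G.IsNClique 3 T₂ →
      (T₁ ∩ L).card = 1 → (T₂ ∩ L).card = 1 → Disjoint T₁ T₂ →
      (T₁ ∩ A i).Nonempty → (T₂ ∩ A i).Nonempty → False := by
  intro i T₁ T₂ h1 h2 hc1 hc2 hd12 hn1 hn2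
  -- key: a good triangle meeting A i is disjoint from A j for j ≠ i
  have key : ∀ T : Finset V, (T ∩ L).card = 1 → (T ∩ A i).Nonempty →
      ∀ j : Fin r, j ≠ i → Disjoint T (A j) := by
    intro T hc hn j hj
    obtain ⟨x, hx⟩ := hn
    rw [Finset.mem_inter] at hx
    obtain ⟨a, ha⟩ := Finset.card_eq_one.mp hc
    rw [Finset.disjoint_left]
    intro y hyT hyA
    have hxL : x ∈ T ∩ L := by
      rw [Finset.mem_inter]
      exact ⟨hx.1, by rw [hL]; exact Finset.mem_biUnion.mpr ⟨i, Finset.mem_univ _, hx.2⟩⟩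
    have hyL : y ∈ T ∩ L := by
      rw [Finset.mem_inter]
      exact ⟨hyT, by rw [hL]; exact Finset.mem_biUnion.mpr ⟨j, Finset.mem_univ _, hyA⟩⟩
    rw [ha, Finset.mem_singleton] at hxL hyL
    have hxy : y = x := hyL.trans hxL.symm
    exact (Finset.disjoint_left.mp (hdisj j i hj) hyA) (hxy ▸ hx.2)
  apply hmax
  refine ⟨fun j => if h : (j : ℕ) < r then
      (if (⟨j, h⟩ : Fin r) = i then T₁ else A ⟨j, h⟩) else T₂, ?_, ?_⟩
  · intro j
    by_cases h : (j : ℕ) < r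
    · by_cases h' : (⟨j, h⟩ : Fin r) = i
      · simp [h, h', h1]
      · simp [h, h', hA]
    · simp [h, h2]
  · intro j j' hne
    have hgen : ∀ j j' : Fin (r + 1), j ≠ j' →
        ∀ h : (j : ℕ) < r, ∀ h' : (j' : ℕ) < r,
        (⟨j, h⟩ : Fin r) ≠ (⟨j', h'⟩ : Fin r) := by
      intro j j' hne h h' heq
      injection heq with hv; exact hne (Fin.ext hv)
    by_cases h : (j : ℕ) < r <;> by_cases h' : (j' : ℕ) < r
    · have hne' := hgen j j' hne h h'
      by_cases hi : (⟨j, h⟩ : Fin r) = i <;> by_cases hi' : (⟨j', h'⟩ : Fin r) = i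
      · exact absurd (hi.trans hi'.symm) hne'
      · simp only [dif_pos h, dif_pos h', if_pos hi, if_neg hi']
        exact key T₁ hc1 hn1 _ hi'
      · simp only [dif_pos h, dif_pos h', if_neg hi, if_pos hi']
        exact (key T₁ hc1 hn1 _ hi).symm
      · simp only [dif_pos h, dif_pos h', if_neg hi, if_neg hi']
        exact hdisj _ _ hne'
    · by_cases hi : (⟨j, h⟩ : Fin r) = i
      · simp only [dif_pos h, dif_neg h', if_pos hi]
        exact hd12
      · simp only [dif_pos h, dif_neg h', if_neg hi]
        exact (key T₂ hc2 hn2 _ hi).symm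
    · by_cases hi' : (⟨j', h'⟩ : Fin r) = i
      · simp only [dif_neg h, dif_pos h', if_pos hi']
        exact hd12.symm
      · simp only [dif_neg h, dif_pos h', if_neg hi']
        exact key T₂ hc2 hn2 _ hi'
    · exfalso
      apply hne
      have hj : (j : ℕ) = r := Nat.le_antisymm (Nat.lt_succ_iff.mp j.isLt) (Nat.le_of_not_lt h)
      have hj' : (j' : ℕ) = r := Nat.le_antisymm (Nat.lt_succ_iff.mp j'.isLt) (Nat.le_of_not_lt h')
      exact Fin.ext (hj.trans hj'.symm)
end
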